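/- Let g : ℝⁿ → ℝᵐ be continuously differentiable with Jacobian bounds Dg(z) ∈ [J̲_{[x,x̂]}, J̄_{[x,x̂]}] on every box [x, x̂]. Define matrices M̲, M̄ column-by-column by M̲ᵢ = (J̲_{[x, x̂_{[Rᵢ:x]}]})ᵢ and M̄ᵢ = (J̄_{[x, x̂_{[Rᵢ:x]}]})ᵢ, where Rᵢ = {i+1, …, n} and x̂_{[Rᵢ:x]} replaces coordinates in Rᵢ of x̂ by those of x. Then for every z ∈ [x, x̂]: g(x) + [M̲]⁻(x̂ − x) ≤ g(z) ≤ g(x) + [M̄]⁺(x̂ − x). Moreover, these mixed bounds are at least as tight as the non-mixed ones: g(x) + [J̲_{[x,x̂]}]⁻(x̂ − x) ≤ g(x) + [M̲]⁻(x̂ − x) and g(x) + [M̄]⁺(x̂ − x) ≤ g(x) + [J̄_{[x,x̂]}]⁺(x̂ − x). -/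

import Mathlib

/-- Entrywise nonnegative part of a matrix. -/
def mpos {m n : ℕ} (A : Matrix (Fin m) (Fin n) ℝ) : Matrix (Fin m) (Fin n) ℝ :=
  fun i j => max (A i j) 0

/-- Entrywise nonpositive part of a matrix. -/
def mneg {m n : ℕ} (A : Matrix (Fin m) (Fin n) ℝ) : Matrix (Fin m) (Fin n) ℝ :=
  fun i j => min (A i j) 0

/-- `xu_{[Rᵢ:x]}` : replace the coordinates `j ∈ Rᵢ = {i+1,…,n}` of `xu` by those of `x`. -/
def replAfter {n : ℕ} (x xu : Fin n → ℝ) (i : Fin n) : Fin n → ℝ :=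
  fun j => if i < j then x j else xu j

/-- If `φ` has derivative `d` everywhere and `d ≤ C` on `[0,1]`, then `φ 1 - φ 0 ≤ C`. -/
lemma deriv_sub_le {φ d : ℝ → ℝ} (hφ : ∀ t, HasDerivAt φ (d t) t) {C : ℝ}
    (hd : ∀ t ∈ Set.Icc (0:ℝ) 1, d t ≤ C) : φ 1 - φ 0 ≤ C := by
  have hψ : ∀ t, HasDerivAt (fun s => C * s - φ s) (C - d t) t := fun t => by
    simpa using ((hasDerivAt_id t).const_mul C).fun_sub (hφ t)
  have hmono : MonotoneOn (fun s => C * s - φ s) (Set.Icc 0 1) := by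
    apply monotoneOn_of_deriv_nonneg (convex_Icc 0 1)
    · exact Continuous.continuousOn (continuous_iff_continuousAt.2 fun t =>
        (hψ t).differentiableAt.continuousAt)
    · exact fun t _ => (hψ t).differentiableAt.differentiableWithinAt
    · intro t ht
      rw [interior_Icc] at ht
      rw [(hψ t).deriv]
      have := hd t ⟨le_of_lt ht.1, le_of_lt ht.2⟩
      linarith
  have := hmono (Set.left_mem_Icc.2 zero_le_one) (Set.right_mem_Icc.2 zero_le_one) zero_le_one
  simp only at this
  linarith

/-- Per-segment mean-value bound along the `i`-th coordinate. -/
lemma seg_bound {n m : ℕ} {g : (Fin n → ℝ) → (Fin m → ℝ)} (hg : ContDiff ℝ 1 g)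
    {x xu z : Fin n → ℝ} (hx : x ≤ xu) (hz : z ∈ Set.Icc x xu) (i : Fin n) (k : Fin m)
    {lo hi : ℝ}
    (hb : ∀ w ∈ Set.Icc x (replAfter x xu i),
      lo ≤ fderiv ℝ g w (Pi.single i 1) k ∧ fderiv ℝ g w (Pi.single i 1) k ≤ hi) :
    min lo 0 * (xu i - x i) ≤
      g (fun j => if (j:ℕ) < i + 1 then z j else x j) k -
        g (fun j => if (j:ℕ) < i then z j else x j) k ∧
    g (fun j => if (j:ℕ) < i + 1 then z j else x j) k -
        g (fun j => if (j:ℕ) < i then z j else x j) k ≤ max hi 0 * (xu i - x i) := by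
  set a : ℝ := z i - x i with ha_def
  set e : Fin n → ℝ := Pi.single i 1 with he_def
  set wlo : Fin n → ℝ := fun j => if (j:ℕ) < i then z j else x j with hwlo_def
  set y : ℝ → Fin n → ℝ := fun t => wlo + (t * a) • e with hy_def
  have ha0 : 0 ≤ a := sub_nonneg.2 (hz.1 i)
  have ha1 : a ≤ xu i - x i := by
    have := hz.2 i; rw [ha_def]; linarith
  have hb0 : (0:ℝ) ≤ xu i - x i := sub_nonneg.2 (hx i)
  have hy0 : y 0 = wlo := by simp [hy_def]
  have hy1 : y 1 = fun j : Fin n => if (j:ℕ) < i + 1 then z j else x j := by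
    funext j
    simp only [hy_def, Pi.add_apply, Pi.smul_apply, smul_eq_mul, one_mul, he_def,
      Pi.single_apply, hwlo_def]
    rcases lt_trichotomy (j:ℕ) (i:ℕ) with h|h|h
    · have hne : j ≠ i := fun hh => by rw [hh] at h; exact absurd h (lt_irrefl _)
      rw [if_pos h, if_neg hne, if_pos (Nat.lt_succ_of_lt h)]; ring
    · have hji : j = i := Fin.ext h
      subst hji
      rw [if_neg (lt_irrefl _), if_pos rfl, if_pos (Nat.lt_succ_self _), ha_def]; ring
    · have hne : j ≠ i := fun hh => by rw [hh] at h; exact absurd h (lt_irrefl _)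
      have h2 : ¬ (j:ℕ) < (i:ℕ) + 1 := by omega
      rw [if_neg (by omega), if_neg hne, if_neg h2]; ring
  have hmem : ∀ t ∈ Set.Icc (0:ℝ) 1, y t ∈ Set.Icc x (replAfter x xu i) := by
    intro t ht
    constructor <;> intro j <;>
      simp only [hy_def, Pi.add_apply, Pi.smul_apply, smul_eq_mul, he_def, Pi.single_apply,
        hwlo_def, replAfter]
    · by_cases hji : j = i
      · subst hji
        rw [if_pos rfl, if_neg (lt_irrefl _)]
        nlinarith [mul_nonneg ht.1 ha0]
      · rw [if_neg hji, mul_zero, add_zero]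
        by_cases h : (j:ℕ) < (i:ℕ)
        · rw [if_pos h]; exact hz.1 j
        · rw [if_neg h]
    · by_cases hji : j = i
      · subst hji
        rw [if_pos rfl, if_neg (lt_irrefl _), if_neg (lt_irrefl _)]
        nlinarith [mul_le_mul_of_nonneg_right ht.2 ha0]
      · rw [if_neg hji, mul_zero, add_zero]
        by_cases h : (j:ℕ) < (i:ℕ)
        · have : ¬ i < j := by
            intro hh; exact absurd (lt_trans hh (show j < i from h)) (lt_irrefl _)
          rw [if_pos h, if_neg this]; exact hz.2 j
        · have : i < j := by
            rcases lt_or_eq_of_le (le_of_not_gt h) with h'|h'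
            · exact h'
            · exact absurd (Fin.ext (by omega)) hji
          rw [if_neg h, if_pos this]
  have hyd : ∀ t : ℝ, HasDerivAt y (a • e) t := fun t => by
    have h1 : HasDerivAt (fun s : ℝ => s * a) a t := hasDerivAt_mul_const a
    simpa [hy_def] using (h1.smul_const e).const_add wlo
  have hG : ∀ t : ℝ, HasDerivAt (fun s => g (y s)) (fderiv ℝ g (y t) (a • e)) t := fun t =>
    ((hg.differentiable one_ne_zero) (y t)).hasFDerivAt.comp_hasDerivAt t (hyd t)
  have hφ : ∀ t : ℝ, HasDerivAt (fun s => g (y s) k) (a * fderiv ℝ g (y t) e k) t := by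
    intro t
    have := (ContinuousLinearMap.proj (R := ℝ) (φ := fun _ : Fin m => ℝ)
      k).hasFDerivAt.comp_hasDerivAt t (hG t)
    simpa [map_smul, Function.comp_def] using this
  have hup : (fun s => g (y s) k) 1 - (fun s => g (y s) k) 0 ≤ max hi 0 * (xu i - x i) := by
    apply deriv_sub_le hφ
    intro t ht
    obtain ⟨hp1, hp2⟩ := hb (y t) (hmem t ht)
    have hM : fderiv ℝ g (y t) e k ≤ max hi 0 :=
      le_trans (by rw [he_def]; exact hp2) (le_max_left _ _)
    nlinarith [mul_le_mul_of_nonneg_left hM ha0,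
      mul_le_mul_of_nonneg_right ha1 (le_max_right hi 0)]
  have hlow : (fun s => -(g (y s) k)) 1 - (fun s => -(g (y s) k)) 0 ≤
      -(min lo 0 * (xu i - x i)) := by
    apply deriv_sub_le (fun t => (hφ t).neg)
    intro t ht
    obtain ⟨hp1, hp2⟩ := hb (y t) (hmem t ht)
    have hM : min lo 0 ≤ fderiv ℝ g (y t) e k :=
      le_trans (min_le_left _ _) (by rw [he_def]; exact hp1)
    nlinarith [mul_le_mul_of_nonneg_left hM ha0,
      mul_le_mul_of_nonpos_right ha1 (min_le_right lo 0)]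
  simp only [hy0, hy1] at hup hlow
  constructor <;> [linarith; linarith]

/-- Mixed Jacobian-based cornered inclusion function: with Jacobian bounds
`Jlo ≤ Dg ≤ Jhi` on `[x,xu]` and `Jloi i ≤ Dg ≤ Jhii i` on the nested boxes
`[x, xu_{[Rᵢ:x]}]`, satisfying the columnwise monotonicity `Jlo ≤ Jloi i`, `Jhii i ≤ Jhi`,
the mixed matrices `Mlo, Mhi` (column `i` taken from the nested bounds) give, for every
`z ∈ [x,xu]`, `g(x) + [Mlo]⁻(xu−x) ≤ g(z) ≤ g(x) + [Mhi]⁺(xu−x)`, and these bounds are at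
least as tight as the non-mixed ones. -/
theorem stmt2 {n m : ℕ} (g : (Fin n → ℝ) → (Fin m → ℝ)) (hg : ContDiff ℝ 1 g)
    (x xu : Fin n → ℝ) (hx : x ≤ xu)
    (Jlo Jhi : Matrix (Fin m) (Fin n) ℝ)
    (Jloi Jhii : Fin n → Matrix (Fin m) (Fin n) ℝ)
    (hJ : ∀ z ∈ Set.Icc x xu, ∀ i j,
      Jlo i j ≤ fderiv ℝ g z (Pi.single j 1) i ∧ fderiv ℝ g z (Pi.single j 1) i ≤ Jhi i j)
    (hJi : ∀ i : Fin n, ∀ z ∈ Set.Icc x (replAfter x xu i), ∀ k j,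
      Jloi i k j ≤ fderiv ℝ g z (Pi.single j 1) k ∧
        fderiv ℝ g z (Pi.single j 1) k ≤ Jhii i k j)
    (hmonolo : ∀ i : Fin n, ∀ k j, Jlo k j ≤ Jloi i k j)
    (hmonohi : ∀ i : Fin n, ∀ k j, Jhii i k j ≤ Jhi k j) :
    (∀ z ∈ Set.Icc x xu,
      g x + (mneg (fun k i => Jloi i k i)).mulVec (xu - x) ≤ g z ∧
      g z ≤ g x + (mpos (fun k i => Jhii i k i)).mulVec (xu - x)) ∧
    g x + (mneg Jlo).mulVec (xu - x) ≤ g x + (mneg (fun k i => Jloi i k i)).mulVec (xu - x) ∧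
    g x + (mpos (fun k i => Jhii i k i)).mulVec (xu - x) ≤ g x + (mpos Jhi).mulVec (xu - x) := by
  have hmvlo : ∀ k : Fin m, (mneg (fun k i => Jloi i k i)).mulVec (xu - x) k =
      ∑ i : Fin n, min (Jloi i k i) 0 * (xu i - x i) := by
    intro k; simp [Matrix.mulVec, dotProduct, mneg]
  have hmvhi : ∀ k : Fin m, (mpos (fun k i => Jhii i k i)).mulVec (xu - x) k =
      ∑ i : Fin n, max (Jhii i k i) 0 * (xu i - x i) := by
    intro k; simp [Matrix.mulVec, dotProduct, mpos]
  have main : ∀ z ∈ Set.Icc x xu, ∀ k : Fin m,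
      (mneg (fun k i => Jloi i k i)).mulVec (xu - x) k ≤ g z k - g x k ∧
      g z k - g x k ≤ (mpos (fun k i => Jhii i k i)).mulVec (xu - x) k := by
    intro z hz k
    set F : ℕ → ℝ := fun N => g (fun j : Fin n => if (j:ℕ) < N then z j else x j) k with hF
    have hF0 : F 0 = g x k := by simp [hF]
    have hFn : F n = g z k := by
      have hzz : (fun j : Fin n => if (j:ℕ) < n then z j else x j) = z := by
        funext j; rw [if_pos j.isLt]
      simp only [hF]
      rw [hzz]
    have htel : g z k - g x k = ∑ i : Fin n, (F ((i:ℕ)+1) - F (i:ℕ)) := by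
      rw [Fin.sum_univ_eq_sum_range (fun i => F (i+1) - F i) n, Finset.sum_range_sub, hF0, hFn]
    have hterm : ∀ i : Fin n,
        min (Jloi i k i) 0 * (xu i - x i) ≤ F ((i:ℕ)+1) - F (i:ℕ) ∧
        F ((i:ℕ)+1) - F (i:ℕ) ≤ max (Jhii i k i) 0 * (xu i - x i) := fun i =>
      seg_bound hg hx hz i k (fun w hw => hJi i w hw k i)
    constructor
    · rw [hmvlo k, htel]
      exact Finset.sum_le_sum fun i _ => (hterm i).1
    · rw [hmvhi k, htel]
      exact Finset.sum_le_sum fun i _ => (hterm i).2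
  refine ⟨fun z hz => ⟨?_, ?_⟩, ?_, ?_⟩
  · intro k
    have := (main z hz k).1
    simp only [Pi.add_apply]
    linarith
  · intro k
    have := (main z hz k).2
    simp only [Pi.add_apply]
    linarith
  · intro k
    simp only [Pi.add_apply]
    have h : (mneg Jlo).mulVec (xu - x) k ≤ (mneg (fun k i => Jloi i k i)).mulVec (xu - x) k := by
      rw [hmvlo k]
      simp only [Matrix.mulVec, dotProduct, mneg, Pi.sub_apply]
      exact Finset.sum_le_sum fun i _ =>
        mul_le_mul_of_nonneg_right (min_le_min (hmonolo i k i) le_rfl) (sub_nonneg.2 (hx i))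
    linarith
  · intro k
    simp only [Pi.add_apply]
    have h : (mpos (fun k i => Jhii i k i)).mulVec (xu - x) k ≤ (mpos Jhi).mulVec (xu - x) k := by
      rw [hmvhi k]
      simp only [Matrix.mulVec, dotProduct, mpos, Pi.sub_apply]
      exact Finset.sum_le_sum fun i _ =>
        mul_le_mul_of_nonneg_right (max_le_max (hmonohi i k i) le_rfl) (sub_nonneg.2 (hx i))
    linarith
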